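/- Let G be a finite connected simple graph. If the CEJZ boundary satisfies |(∂G)'| = 3, then the Steinerberger boundary satisfies |∂G| = 3. -/
import Mathlib


open Finset

variable {V : Type*}

/-- The Steinerberger boundary of a graph. -/
def sBoundary (G : SimpleGraph V) [Fintype V] [DecidableRel G.Adj] : Set V :=
  if Fintype.card V = 1 then Set.univ
  else {v | ∃ u : V, ∑ w ∈ G.neighborFinset v, G.dist w u < G.degree v * G.dist v u}

/-- The Chartrand–Erwin–Johns–Zhang boundary of a graph. -/
def cBoundary (G : SimpleGraph V) : Set V :=
  {v | ∃ u : V, ∀ w : V, G.Adj v w → G.dist w u ≤ G.dist v u}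

section Aux

variable [Fintype V] {G : SimpleGraph V}

lemma dist_lt_card (hc : G.Connected) (u v : V) : G.dist u v < Fintype.card V := by
  obtain ⟨p, hp, hl⟩ := hc.exists_path_of_dist u v
  exact hl ▸ hp.length_lt

/-- Every vertex lies on a geodesic from any base vertex to some cBoundary vertex. -/
lemma exists_cBoundary_ext (hc : G.Connected) (u a : V) :
    ∃ z ∈ cBoundary G, G.dist u z = G.dist u a + G.dist a z := by
  have key : ∀ n : ℕ, ∀ a : V, Fintype.card V ≤ G.dist u a + n →
      ∃ z ∈ cBoundary G, G.dist u z = G.dist u a + G.dist a z := by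
    intro n
    induction n with
    | zero => intro a ha; exact absurd (dist_lt_card hc u a) (by omega)
    | succ n ih =>
      intro a ha
      by_cases hmem : a ∈ cBoundary G
      · exact ⟨a, hmem, by simp⟩
      · simp only [cBoundary, Set.mem_setOf_eq, not_exists, not_forall] at hmem
        obtain ⟨w, haw, hwu⟩ := hmem u
        push_neg at hwu
        have h1 : G.dist a w = 1 := by rwa [SimpleGraph.dist_eq_one_iff_adj]
        have hle : G.dist u w ≤ G.dist u a + 1 := by
          have := hc.dist_triangle (u := u) (v := a) (w := w); omega
        have hwua : G.dist u w = G.dist u a + 1 := by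
          have c1 : G.dist u w = G.dist w u := SimpleGraph.dist_comm
          have c2 : G.dist u a = G.dist a u := SimpleGraph.dist_comm
          omega
        obtain ⟨z, hz, hzd⟩ := ih w (by omega)
        refine ⟨z, hz, ?_⟩
        have t1 : G.dist a z ≤ 1 + G.dist w z := by
          have := hc.dist_triangle (u := a) (v := w) (w := z); omega
        have t2 : G.dist u z ≤ G.dist u a + G.dist a z := hc.dist_triangle
        omega
  exact key (Fintype.card V) a (by have := dist_lt_card hc u a; omega)

end Aux

lemma mem3_eq {α : Type*} {x y z b0 b1 t w : α}
    (hb0 : b0 = x ∨ b0 = y ∨ b0 = z) (hb1 : b1 = x ∨ b1 = y ∨ b1 = z)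
    (ht : t = x ∨ t = y ∨ t = z) (hw : w = x ∨ w = y ∨ w = z)
    (hb : b0 ≠ b1) (htb0 : t ≠ b0) (htb1 : t ≠ b1) (hwb0 : w ≠ b0) (hwb1 : w ≠ b1) :
    t = w := by
  rcases hb0 with rfl | rfl | rfl <;> rcases hb1 with rfl | rfl | rfl <;>
    rcases ht with rfl | rfl | rfl <;> rcases hw with rfl | rfl | rfl <;> tauto

theorem sBoundary_card_three_of_cBoundary_card_three [Fintype V] (G : SimpleGraph V)
    [DecidableRel G.Adj] (hc : G.Connected) (h3 : (cBoundary G).ncard = 3) :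
    (sBoundary G).ncard = 3 := by
  classical
  obtain ⟨x, y, z, hxy, hxz, hyz, hset⟩ := Set.ncard_eq_three.mp h3
  have hcard2 : 1 < Fintype.card V := Fintype.one_lt_card_iff_nontrivial.mpr ⟨⟨x, y, hxy⟩⟩
  have hcard1 : Fintype.card V ≠ 1 := by omega
  have hs : sBoundary G = {v | ∃ u : V, ∑ w ∈ G.neighborFinset v, G.dist w u
      < G.degree v * G.dist v u} := by
    simp [sBoundary, hcard1]
  -- a vertex closer along geodesic
  have geo : ∀ v u : V, v ≠ u → ∃ w, G.Adj v w ∧ G.dist w u + 1 = G.dist v u := by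
    intro v u hvu
    obtain ⟨p, hl⟩ := hc.exists_walk_length_eq_dist v u
    cases p with
    | nil => exact absurd rfl hvu
    | cons h q =>
      rename_i w
      refine ⟨w, h, ?_⟩
      have h1 : G.dist w u ≤ q.length := SimpleGraph.dist_le q
      have h2 : G.dist v u ≤ 1 + G.dist w u := by
        have := hc.dist_triangle (u := v) (v := w) (w := u)
        have : G.dist v w ≤ 1 := by
          have : G.dist v w = 1 := SimpleGraph.dist_eq_one_iff_adj.mpr h
          omega
        omega
      simp only [SimpleGraph.Walk.length_cons] at hl
      omega
  -- every vertex has positive degree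
  have degpos : ∀ v : V, 0 < G.degree v := by
    intro v
    obtain ⟨u, hu⟩ := Fintype.exists_ne_of_one_lt_card hcard2 v
    obtain ⟨w, hw, -⟩ := geo v u (Ne.symm hu)
    rw [← SimpleGraph.card_neighborFinset_eq_degree]
    exact Finset.card_pos.mpr ⟨w, (G.mem_neighborFinset v w).mpr hw⟩
  -- Part 1 : cBoundary ⊆ sBoundary
  have part1 : cBoundary G ⊆ sBoundary G := by
    intro v hv
    obtain ⟨u, hu⟩ := hv
    rw [hs]
    have hvu : v ≠ u := by
      rintro rfl
      obtain ⟨u0, hu0⟩ := Fintype.exists_ne_of_one_lt_card hcard2 v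
      obtain ⟨w, hw, -⟩ := geo v u0 (Ne.symm hu0)
      have := hu w hw
      rw [SimpleGraph.dist_self] at this
      have hwv : w ≠ v := (G.ne_of_adj hw).symm
      have := (hc w v).pos_dist_of_ne hwv
      omega
    obtain ⟨w1, hw1, hd1⟩ := geo v u hvu
    refine ⟨u, ?_⟩
    have hcardn : (G.neighborFinset v).card = G.degree v :=
      SimpleGraph.card_neighborFinset_eq_degree G v
    calc ∑ w ∈ G.neighborFinset v, G.dist w u
        < ∑ w ∈ G.neighborFinset v, G.dist v u := by
          apply Finset.sum_lt_sum
          · intro i hi; exact hu i ((G.mem_neighborFinset v i).mp hi)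
          · exact ⟨w1, (G.mem_neighborFinset v w1).mpr hw1, by omega⟩
      _ = G.degree v * G.dist v u := by rw [Finset.sum_const, hcardn, smul_eq_mul]
  -- Part 2 : sBoundary ⊆ cBoundary
  have part2 : sBoundary G ⊆ cBoundary G := by
    intro v hv
    by_contra hvc
    rw [hs] at hv
    obtain ⟨u, hu⟩ := hv
    have hnc : ∀ p : V, ∃ w, G.Adj v w ∧ G.dist v p < G.dist w p := by
      intro p
      simp only [cBoundary, Set.mem_setOf_eq, not_exists, not_forall] at hvc
      obtain ⟨w, haw, hwu⟩ := hvc p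
      exact ⟨w, haw, by push_neg at hwu; omega⟩
    have hdpos : 0 < G.dist v u := by
      by_contra h
      push_neg at h
      interval_cases hd : G.dist v u
      simp at hu
    -- b1 : boundary vertex beyond v from u
    obtain ⟨b1, hb1, hb1d⟩ := exists_cBoundary_ext hc u v
    -- b0 : boundary vertex beyond u from b1
    obtain ⟨b0, hb0, hb0d⟩ := exists_cBoundary_ext hc b1 u
    have hvb1 : v ≠ b1 := by rintro rfl; exact hvc hb1
    have hvb0 : v ≠ b0 := by rintro rfl; exact hvc hb0
    -- d(b0, v) = d(b0, u) + d(u, v)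
    have e1 : G.dist b0 v = G.dist b0 u + G.dist u v := by
      have t1 : G.dist b0 v ≤ G.dist b0 u + G.dist u v := hc.dist_triangle
      have t2 : G.dist b0 b1 ≤ G.dist b0 v + G.dist v b1 := hc.dist_triangle
      have c1 : G.dist b0 b1 = G.dist b1 b0 := SimpleGraph.dist_comm
      have c2 : G.dist b1 u = G.dist u b1 := SimpleGraph.dist_comm
      have c3 : G.dist b0 u = G.dist u b0 := SimpleGraph.dist_comm
      have c4 : G.dist u v = G.dist v u := SimpleGraph.dist_comm
      omega
    have hb0b1 : b0 ≠ b1 := by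
      rintro rfl
      have c2 : G.dist b0 u = G.dist u b0 := SimpleGraph.dist_comm
      have c4 : G.dist u v = G.dist v u := SimpleGraph.dist_comm
      have : G.dist b0 b0 = 0 := SimpleGraph.dist_self
      omega
    set k := G.dist b0 v with hk
    set m := G.dist v b1 with hm
    have hkpos : 0 < k := (hc b0 v).pos_dist_of_ne (Ne.symm hvb0)
    have hD01 : G.dist b0 b1 = k + m := by
      have c1 : G.dist b0 b1 = G.dist b1 b0 := SimpleGraph.dist_comm
      have c2 : G.dist b1 u = G.dist u b1 := SimpleGraph.dist_comm
      have c3 : G.dist b0 u = G.dist u b0 := SimpleGraph.dist_comm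
      omega
    -- transfer the witness inequality to b0
    have hwit : ∑ w ∈ G.neighborFinset v, G.dist w b0 < G.degree v * k := by
      have hpt : ∀ w ∈ G.neighborFinset v,
          G.dist w b0 + G.dist v u ≤ G.dist w u + k := by
        intro w hw
        have t1 : G.dist b0 w ≤ G.dist b0 u + G.dist u w := hc.dist_triangle
        have c1 : G.dist b0 w = G.dist w b0 := SimpleGraph.dist_comm
        have c2 : G.dist u w = G.dist w u := SimpleGraph.dist_comm
        have c4 : G.dist u v = G.dist v u := SimpleGraph.dist_comm
        omega
      have hsum : (∑ w ∈ G.neighborFinset v, G.dist w b0) + G.degree v * G.dist v u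
          ≤ (∑ w ∈ G.neighborFinset v, G.dist w u) + G.degree v * k := by
        have := Finset.sum_le_sum hpt
        rw [Finset.sum_add_distrib, Finset.sum_add_distrib, Finset.sum_const, Finset.sum_const,
          SimpleGraph.card_neighborFinset_eq_degree, smul_eq_mul, smul_eq_mul] at this
        omega
      omega
    -- each neighbor is at distance ≥ k - 1 from b0
    have hlb : ∀ w ∈ G.neighborFinset v, k ≤ G.dist w b0 + 1 := by
      intro w hw
      rw [G.mem_neighborFinset] at hw
      have t1 : G.dist b0 v ≤ G.dist b0 w + G.dist w v := hc.dist_triangle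
      have h1 : G.dist w v = 1 := SimpleGraph.dist_eq_one_iff_adj.mpr hw.symm
      have c1 : G.dist b0 w = G.dist w b0 := SimpleGraph.dist_comm
      omega
    -- a farther neighbor exists since v ∉ cBoundary
    obtain ⟨f, hf, hfd⟩ := hnc b0
    have hfmem : f ∈ G.neighborFinset v := (G.mem_neighborFinset v f).mpr hf
    have hfd' : k + 1 ≤ G.dist f b0 := by
      have c1 : G.dist v b0 = k := SimpleGraph.dist_comm
      have c2 : G.dist f b0 = G.dist b0 f := SimpleGraph.dist_comm
      have c3 : G.dist v b0 = G.dist b0 v := SimpleGraph.dist_comm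
      omega
    -- counting: at least two neighbors strictly closer to b0
    have htwo : 1 < ((G.neighborFinset v).filter (fun w => G.dist w b0 < k)).card := by
      by_contra hcnt
      push_neg at hcnt
      set C := (G.neighborFinset v).filter (fun w => G.dist w b0 < k) with hC
      set Cc := (G.neighborFinset v) \ C with hCc
      have hfC : f ∉ C := by
        simp only [hC, Finset.mem_filter]
        rintro ⟨-, h⟩; omega
      have hfCc : f ∈ Cc := Finset.mem_sdiff.mpr ⟨hfmem, hfC⟩
      have hsplit : (∑ w ∈ Cc, G.dist w b0) + ∑ w ∈ C, G.dist w b0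
          = ∑ w ∈ G.neighborFinset v, G.dist w b0 := by
        rw [hCc]
        exact Finset.sum_sdiff (by rw [hC]; exact Finset.filter_subset _ _)
      have hCck : ∀ w ∈ Cc \ {f}, k ≤ G.dist w b0 := by
        intro w hw
        obtain ⟨hw1, -⟩ := Finset.mem_sdiff.mp hw
        obtain ⟨hw2, hw3⟩ := Finset.mem_sdiff.mp hw1
        simp only [hC, Finset.mem_filter] at hw3
        push_neg at hw3
        exact hw3 hw2
      have hCk : ∀ w ∈ C, k ≤ G.dist w b0 + 1 := by
        intro w hw
        exact hlb w (Finset.mem_filter.mp hw).1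
      -- lower bound on the sum
      have hsum1 : ∑ w ∈ Cc \ {f}, k ≤ ∑ w ∈ Cc \ {f}, G.dist w b0 :=
        Finset.sum_le_sum hCck
      have hsum2 : ∑ w ∈ C, k ≤ ∑ w ∈ C, (G.dist w b0 + 1) := Finset.sum_le_sum hCk
      have hfsub : {f} ⊆ Cc := Finset.singleton_subset_iff.mpr hfCc
      have hCcsplit : (∑ w ∈ Cc \ {f}, G.dist w b0) + G.dist f b0
          = ∑ w ∈ Cc, G.dist w b0 := by
        rw [← Finset.sum_sdiff hfsub, Finset.sum_singleton]
      have hcards : C.card + Cc.card = G.degree v := by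
        have hsub : C ⊆ G.neighborFinset v := by
          rw [hC]; exact Finset.filter_subset _ _
        rw [hCc, Finset.card_sdiff_of_subset hsub, ← SimpleGraph.card_neighborFinset_eq_degree]
        have hle2 := Finset.card_le_card hsub
        omega
      have hcardCc : (Cc \ {f}).card + 1 = Cc.card := by
        rw [Finset.card_sdiff_of_subset hfsub, Finset.card_singleton]
        have := Finset.card_pos.mpr ⟨f, hfCc⟩
        omega
      rw [Finset.sum_const, smul_eq_mul] at hsum1
      rw [Finset.sum_const, smul_eq_mul, Finset.sum_add_distrib, Finset.sum_const,
        smul_eq_mul, mul_one] at hsum2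
      -- combine everything
      have hCcard : C.card ≤ 1 := hcnt
      have hmul : G.degree v * k = C.card * k + (Cc \ {f}).card * k + k := by
        rw [← hcards, ← hcardCc]; ring
      omega
    -- extract two distinct closer neighbors
    obtain ⟨w1, hw1m, w2, hw2m, hw12⟩ := Finset.one_lt_card.mp htwo
    obtain ⟨hw1n, hw1d⟩ := Finset.mem_filter.mp hw1m
    obtain ⟨hw2n, hw2d⟩ := Finset.mem_filter.mp hw2m
    have hw1d' : G.dist w1 b0 + 1 = k := by have := hlb w1 hw1n; omega
    have hw2d' : G.dist w2 b0 + 1 = k := by have := hlb w2 hw2n; omega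
    -- distances to b1
    have hdb1 : ∀ w, G.Adj v w → G.dist w b0 + 1 = k → G.dist w b1 = m + 1 := by
      intro w hw hwk
      have t1 : G.dist w b1 ≤ G.dist w v + G.dist v b1 := hc.dist_triangle
      have t2 : G.dist b0 b1 ≤ G.dist b0 w + G.dist w b1 := hc.dist_triangle
      have h1 : G.dist w v = 1 := SimpleGraph.dist_eq_one_iff_adj.mpr hw.symm
      have c1 : G.dist b0 w = G.dist w b0 := SimpleGraph.dist_comm
      omega
    have hw1b1 : G.dist w1 b1 = m + 1 :=
      hdb1 w1 ((G.mem_neighborFinset v w1).mp hw1n) hw1d'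
    have hw2b1 : G.dist w2 b1 = m + 1 :=
      hdb1 w2 ((G.mem_neighborFinset v w2).mp hw2n) hw2d'
    have hd12 : 0 < G.dist w1 w2 := (hc w1 w2).pos_dist_of_ne hw12
    have hd21 : 0 < G.dist w2 w1 := (hc w2 w1).pos_dist_of_ne (Ne.symm hw12)
    -- k is at least 2
    have hk2 : 2 ≤ k := by
      by_contra hcon
      push_neg at hcon
      have h1 : G.dist w1 b0 = 0 := by omega
      have h2 : G.dist w2 b0 = 0 := by omega
      exact hw12 (((hc w1 b0).dist_eq_zero_iff.mp h1).trans
        ((hc w2 b0).dist_eq_zero_iff.mp h2).symm)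
    have hne0 : ∀ w, G.dist w b0 + 1 = k → w ≠ b0 := by
      intro w hwk heq
      rw [heq, SimpleGraph.dist_self] at hwk; omega
    have hne1 : ∀ w, G.dist w b1 = m + 1 → w ≠ b1 := by
      intro w hwk heq
      rw [heq, SimpleGraph.dist_self] at hwk; omega
    -- extension lemma for the closer neighbors
    have hext : ∀ wa wb : V, wa ≠ wb →
        G.dist wa b0 + 1 = k → G.dist wb b0 + 1 = k →
        G.dist wa b1 = m + 1 → G.dist wb b1 = m + 1 →
        wa ∉ cBoundary G →
        ∃ t ∈ cBoundary G, t ≠ b0 ∧ t ≠ b1 ∧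
          G.dist wb t = G.dist wb wa + G.dist wa t := by
      intro wa wb hab ha0 hb0' ha1 hb1' hanc
      obtain ⟨t, ht, htd⟩ := exists_cBoundary_ext hc wb wa
      have hta : t ≠ wa := by rintro rfl; exact hanc ht
      have hdab : 0 < G.dist wb wa := (hc wb wa).pos_dist_of_ne (Ne.symm hab)
      refine ⟨t, ht, ?_, ?_, htd⟩
      · intro heq
        rw [heq] at htd hta
        have c1 : G.dist wb b0 = G.dist b0 wb := SimpleGraph.dist_comm
        have c2 : G.dist wa b0 = G.dist b0 wa := SimpleGraph.dist_comm
        omega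
      · intro heq
        rw [heq] at htd hta
        omega
    have hw1b0' := hne0 w1 hw1d'
    have hw2b0' := hne0 w2 hw2d'
    have hw1b1' := hne1 w1 hw1b1
    have hw2b1' := hne1 w2 hw2b1
    have hb0m : b0 = x ∨ b0 = y ∨ b0 = z := by rw [hset] at hb0; simpa using hb0
    have hb1m : b1 = x ∨ b1 = y ∨ b1 = z := by rw [hset] at hb1; simpa using hb1
    have hmem : ∀ t, t ∈ cBoundary G → t = x ∨ t = y ∨ t = z := by
      intro t ht; rw [hset] at ht; simpa using ht
    by_cases h1c : w1 ∈ cBoundary G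
    · by_cases h2c : w2 ∈ cBoundary G
      · exact hw12 (mem3_eq hb0m hb1m (hmem w1 h1c) (hmem w2 h2c) hb0b1
          hw1b0' hw1b1' hw2b0' hw2b1')
      · obtain ⟨t, ht, htb0, htb1, htd⟩ := hext w2 w1 (Ne.symm hw12) hw2d' hw1d'
          hw2b1 hw1b1 h2c
        have htw1 : t = w1 := mem3_eq hb0m hb1m (hmem t ht) (hmem w1 h1c) hb0b1
          htb0 htb1 hw1b0' hw1b1'
        rw [htw1, SimpleGraph.dist_self] at htd
        omega
    · obtain ⟨t1, ht1, ht1b0, ht1b1, ht1d⟩ := hext w1 w2 hw12 hw1d' hw2d'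
        hw1b1 hw2b1 h1c
      by_cases h2c : w2 ∈ cBoundary G
      · have ht1w2 : t1 = w2 := mem3_eq hb0m hb1m (hmem t1 ht1) (hmem w2 h2c) hb0b1
          ht1b0 ht1b1 hw2b0' hw2b1'
        rw [ht1w2, SimpleGraph.dist_self] at ht1d
        omega
      · obtain ⟨t2, ht2, ht2b0, ht2b1, ht2d⟩ := hext w2 w1 (Ne.symm hw12) hw2d' hw1d'
          hw2b1 hw1b1 h2c
        have ht12 : t1 = t2 := mem3_eq hb0m hb1m (hmem t1 ht1) (hmem t2 ht2) hb0b1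
          ht1b0 ht1b1 ht2b0 ht2b1
        rw [← ht12] at ht2d
        have c1 : G.dist w1 w2 = G.dist w2 w1 := SimpleGraph.dist_comm
        omega
  have : sBoundary G = cBoundary G := Set.Subset.antisymm part2 part1
  rw [this, h3]
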